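/- Let n ≥ 3 and let W° = {±1}°^n ⋊ S_n be the group of coordinate permutations of ℝ^n combined with an even number of sign changes. Let c = (1/2, …, 1/2); its stabilizer in W° is the symmetric group S_n acting by permutation of coordinates. Then every S_n-invariant polynomial function on ℝ^n lies in the ℝ-subalgebra generated by the W°-invariant polynomial functions f together with their translates v ↦ f(v + c). -/

import Mathlib

open scoped RealInnerProductSpace

/-- The signed permutation `(ε, σ)` acting on `ℝ^n`: `x ↦ (ε i * x (σ i))_i`. -/
noncomputable def sgnPerm {n : ℕ} (ε : Fin n → ℝ) (σ : Equiv.Perm (Fin n))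
    (x : EuclideanSpace ℝ (Fin n)) : EuclideanSpace ℝ (Fin n) :=
  (WithLp.toLp 2 (fun i => ε i * x (σ i)) : EuclideanSpace ℝ (Fin n))

/-- A polynomial function on a real vector space `M`: an element of the `ℝ`-subalgebra of
`M → ℝ` generated by the linear functionals. -/
def IsPolyFun {M : Type*} [AddCommGroup M] [Module ℝ M] (f : M → ℝ) : Prop :=
  f ∈ Algebra.adjoin ℝ {g : M → ℝ | ∃ l : M →ₗ[ℝ] ℝ, g = ⇑l}

/-- Invariance of `f : ℝ^n → ℝ` under the group `W = {±1}^n ⋊ S_n` of all signed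
permutations of the coordinates. -/
def IsWInv {n : ℕ} (f : EuclideanSpace ℝ (Fin n) → ℝ) : Prop :=
  ∀ (ε : Fin n → ℝ), (∀ i, ε i = 1 ∨ ε i = -1) → ∀ σ : Equiv.Perm (Fin n),
    ∀ x, f (sgnPerm ε σ x) = f x

/-- Invariance of `f : ℝ^n → ℝ` under the group `W° = {±1}°^n ⋊ S_n` of signed
permutations with an even number of sign changes (`∏ ε i = 1`). -/
def IsW0Inv {n : ℕ} (f : EuclideanSpace ℝ (Fin n) → ℝ) : Prop :=
  ∀ (ε : Fin n → ℝ), (∀ i, ε i = 1 ∨ ε i = -1) → (∏ i, ε i = 1) →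
    ∀ σ : Equiv.Perm (Fin n), ∀ x, f (sgnPerm ε σ x) = f x

open MvPolynomial Finset

/-- Evaluation algebra hom from polynomials to polynomial functions. -/
noncomputable def Phi (n : ℕ) : MvPolynomial (Fin n) ℝ →ₐ[ℝ] (EuclideanSpace ℝ (Fin n) → ℝ) :=
  MvPolynomial.aeval (fun i => (fun x => x i : EuclideanSpace ℝ (Fin n) → ℝ))

lemma Phi_apply {n : ℕ} (P : MvPolynomial (Fin n) ℝ) (x : EuclideanSpace ℝ (Fin n)) :
    Phi n P x = MvPolynomial.eval (fun i => x i) P := by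
  induction P using MvPolynomial.induction_on with
  | C a => simp [Phi]
  | add p q hp hq => simp only [map_add, Pi.add_apply, hp, hq]
  | mul_X p i hp =>
    simp only [map_mul, Pi.mul_apply, eval_mul, eval_X, hp]
    congr 1
    simp [Phi]

lemma isPolyFun_Phi {n : ℕ} (P : MvPolynomial (Fin n) ℝ) : IsPolyFun (Phi n P) := by
  have h1 : Phi n P ∈ (Phi n).range := ⟨P, rfl⟩
  rw [Phi, ← Algebra.adjoin_range_eq_range_aeval] at h1
  refine Algebra.adjoin_mono ?_ h1
  rintro _ ⟨i, rfl⟩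
  exact ⟨(EuclideanSpace.proj i).toLinearMap, rfl⟩

lemma polyFun_repr {n : ℕ} {f : EuclideanSpace ℝ (Fin n) → ℝ} (hf : IsPolyFun f) :
    ∃ P : MvPolynomial (Fin n) ℝ, f = Phi n P := by
  refine Algebra.adjoin_induction (p := fun g _ => ∃ P, g = Phi n P) (fun g hg => ?_)
    (fun r => ⟨C r, ?_⟩)
    (fun x y _ _ hx hy => ?_) (fun x y _ _ hx hy => ?_) hf
  · obtain ⟨l, rfl⟩ := hg
    refine ⟨∑ i, C (l (WithLp.toLp 2 (fun j => if i = j then (1 : ℝ) else 0))) * X i, ?_⟩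
    funext x
    rw [Phi_apply]
    have := LinearMap.pi_apply_eq_sum_univ (l ∘ₗ (WithLp.linearEquiv 2 ℝ (Fin n → ℝ)).symm.toLinearMap) x.ofLp
    simp only [smul_eq_mul, LinearMap.coe_comp, Function.comp_apply, LinearEquiv.coe_coe, WithLp.linearEquiv_symm_apply, WithLp.toLp_ofLp] at this
    simp only [map_sum, eval_mul, eval_C, eval_X]
    exact this.trans (Finset.sum_congr rfl fun i _ => mul_comm _ _)
  · funext x; rw [Phi_apply]; simp
  · obtain ⟨P, hP⟩ := hx; obtain ⟨Q, hQ⟩ := hy; exact ⟨P + Q, by rw [hP, hQ, map_add]⟩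
  · obtain ⟨P, hP⟩ := hx; obtain ⟨Q, hQ⟩ := hy; exact ⟨P * Q, by rw [hP, hQ, map_mul]⟩

lemma esymm_mem_adjoin_psum (n k : ℕ) :
    esymm (Fin n) ℝ k ∈ Algebra.adjoin ℝ (Set.range (psum (Fin n) ℝ)) := by
  set S := Algebra.adjoin ℝ (Set.range (psum (Fin n) ℝ)) with hS
  induction k using Nat.strong_induction_on with
  | _ k ih =>
    rcases Nat.eq_zero_or_pos k with h0 | hk
    · subst h0; rw [esymm_zero]; exact S.one_mem
    have hmul : (k : MvPolynomial (Fin n) ℝ) * esymm (Fin n) ℝ k ∈ S := by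
      rw [mul_esymm_eq_sum]
      refine S.mul_mem (S.pow_mem (S.neg_mem S.one_mem) _) (S.sum_mem fun a ha => ?_)
      rw [mem_filter] at ha
      exact S.mul_mem (S.mul_mem (S.pow_mem (S.neg_mem S.one_mem) _) (ih a.1 ha.2))
        (Algebra.subset_adjoin ⟨a.2, rfl⟩)
    have hkne : (k : ℝ) ≠ 0 := Nat.cast_ne_zero.mpr hk.ne'
    have : esymm (Fin n) ℝ k =
        C ((k : ℝ))⁻¹ * ((k : MvPolynomial (Fin n) ℝ) * esymm (Fin n) ℝ k) := by
      rw [← mul_assoc, show ((k : MvPolynomial (Fin n) ℝ)) = C ((k : ℝ)) by simp, ← C_mul,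
        inv_mul_cancel₀ hkne, C_1, one_mul]
    rw [this]
    exact S.mul_mem (S.algebraMap_mem _) hmul

lemma symm_mem_adjoin_psum {n : ℕ} (P : MvPolynomial (Fin n) ℝ) (h : P.IsSymmetric) :
    P ∈ Algebra.adjoin ℝ (Set.range (psum (Fin n) ℝ)) := by
  obtain ⟨Q, hQ⟩ := esymmAlgHom_surjective (σ := Fin n) (R := ℝ) (n := n)
    (by simp) ⟨P, (mem_symmetricSubalgebra P).mpr h⟩
  have hP : P = aeval (fun i : Fin n => esymm (Fin n) ℝ (i + 1)) Q := by
    rw [← esymmAlgHom_apply, hQ]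
  rw [hP]
  have : aeval (fun i : Fin n => esymm (Fin n) ℝ (i + 1)) Q ∈
      Algebra.adjoin ℝ (Set.range (fun i : Fin n => esymm (Fin n) ℝ (i + 1))) := by
    rw [Algebra.adjoin_range_eq_range_aeval]; exact ⟨Q, rfl⟩
  refine Algebra.adjoin_le ?_ this
  rintro _ ⟨i, rfl⟩
  exact esymm_mem_adjoin_psum n (i + 1)

/-- The `k`-th power sum as a function on `ℝ^n`. -/
noncomputable def pfun (n k : ℕ) : EuclideanSpace ℝ (Fin n) → ℝ :=
  fun x => ∑ i, x i ^ k

lemma Phi_psum (n k : ℕ) : Phi n (psum (Fin n) ℝ k) = pfun n k := by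
  funext x
  rw [Phi_apply]
  simp [psum, pfun]

lemma pfun_W0 {n k : ℕ} (hk : k % 2 = 0) : IsW0Inv (pfun n k) := by
  intro ε hε _ σ x
  show ∑ i, (ε i * x (σ i)) ^ k = ∑ i, x i ^ k
  have h1 : ∀ i, (ε i * x (σ i)) ^ k = x (σ i) ^ k := by
    intro i
    rw [mul_pow]
    rcases hε i with h | h
    · rw [h, one_pow, one_mul]
    · rw [h, (Nat.even_iff.mpr hk).neg_one_pow, one_mul]
  rw [Finset.sum_congr rfl fun i _ => h1 i]
  exact Equiv.sum_comp σ (fun i => x i ^ k)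

theorem Dn_stabilizer_of_c_invariants_generated
    (n : ℕ) (hn : 3 ≤ n)
    (c : EuclideanSpace ℝ (Fin n))
    (hc : ∀ i : Fin n, c i = (1 : ℝ) / 2)
    (f : EuclideanSpace ℝ (Fin n) → ℝ) (hf : IsPolyFun f)
    -- `f` is invariant under the stabilizer of `c` in `W°`, which is `S_n`
    (hinv : ∀ σ : Equiv.Perm (Fin n), ∀ x, f (sgnPerm (fun _ => 1) σ x) = f x) :
    f ∈ Algebra.adjoin ℝ
      ({g : EuclideanSpace ℝ (Fin n) → ℝ | IsPolyFun g ∧ IsW0Inv g} ∪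
       {g : EuclideanSpace ℝ (Fin n) → ℝ | ∃ h : EuclideanSpace ℝ (Fin n) → ℝ,
          (IsPolyFun h ∧ IsW0Inv h) ∧ g = fun v => h (v + c)}) := by
  classical
  set A := Algebra.adjoin ℝ
      ({g : EuclideanSpace ℝ (Fin n) → ℝ | IsPolyFun g ∧ IsW0Inv g} ∪
       {g : EuclideanSpace ℝ (Fin n) → ℝ | ∃ h : EuclideanSpace ℝ (Fin n) → ℝ,
          (IsPolyFun h ∧ IsW0Inv h) ∧ g = fun v => h (v + c)}) with hA
  -- even power sums are generators
  have heven : ∀ k, k % 2 = 0 → pfun n k ∈ A := by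
    intro k hk
    exact Algebra.subset_adjoin (Or.inl ⟨Phi_psum n k ▸ isPolyFun_Phi _, pfun_W0 hk⟩)
  -- all power sums lie in `A`
  have hall : ∀ k, pfun n k ∈ A := by
    intro k
    induction k using Nat.strong_induction_on with
    | _ k ih =>
      rcases Nat.eq_zero_or_pos (k % 2) with he | ho
      · exact heven k he
      have hodd : k % 2 = 1 := by omega
      have hN : (k + 1) % 2 = 0 := by omega
      -- the translate of the (k+1)-st power sum
      have hgmem : (fun v => pfun n (k + 1) (v + c)) ∈ A :=
        Algebra.subset_adjoin (Or.inr ⟨pfun n (k + 1),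
          ⟨Phi_psum n (k + 1) ▸ isPolyFun_Phi _, pfun_W0 hN⟩, rfl⟩)
      set a : ℕ → ℝ := fun j => ((1 : ℝ) / 2) ^ (k + 1 - j) * ((k + 1).choose j : ℝ) with ha
      have hgid : ∀ v, pfun n (k + 1) (v + c) = ∑ j ∈ range (k + 2), a j * pfun n j v := by
        intro v
        have h1 : ∀ i, (v + c) i = v i + 1 / 2 := by
          intro i
          rw [show (v + c) i = v i + c i from rfl, hc i]
        calc pfun n (k + 1) (v + c) = ∑ i, (v i + 1 / 2) ^ (k + 1) := by
              refine Finset.sum_congr rfl fun i _ => ?_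
              rw [h1 i]
          _ = ∑ i, ∑ j ∈ range (k + 2), v i ^ j * (1 / 2 : ℝ) ^ (k + 1 - j)
                * ((k + 1).choose j : ℝ) := by
              refine Finset.sum_congr rfl fun i _ => ?_
              rw [add_pow]
          _ = ∑ j ∈ range (k + 2), a j * pfun n j v := by
              rw [Finset.sum_comm]
              refine Finset.sum_congr rfl fun j _ => ?_
              rw [ha, pfun, Finset.mul_sum]
              exact Finset.sum_congr rfl fun i _ => by ring
      have hak : a k = ((k : ℝ) + 1) / 2 := by
        rw [ha]
        simp only [Nat.add_sub_cancel_left, Nat.choose_succ_self_right]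
        push_cast
        ring
      have hakne : a k ≠ 0 := by
        rw [hak]
        positivity
      have key : pfun n k = (a k)⁻¹ • ((fun v => pfun n (k + 1) (v + c)) -
          ∑ j ∈ (range (k + 2)).erase k, a j • pfun n j) := by
        funext v
        have hsplit : pfun n (k + 1) (v + c)
            = a k * pfun n k v + ∑ j ∈ (range (k + 2)).erase k, a j * pfun n j v := by
          rw [hgid v, ← Finset.add_sum_erase _ _ (by simp : k ∈ range (k + 2))]
        simp only [Pi.smul_apply, Pi.sub_apply, Finset.sum_apply, smul_eq_mul]
        rw [hsplit, add_sub_cancel_right, inv_mul_cancel_left₀ hakne]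
      rw [key]
      refine Subalgebra.smul_mem A (A.sub_mem hgmem (A.sum_mem fun j hj => ?_)) _
      rw [Finset.mem_erase, Finset.mem_range] at hj
      rcases eq_or_ne j (k + 1) with rfl | hj'
      · exact Subalgebra.smul_mem A (heven _ hN) _
      · exact Subalgebra.smul_mem A (ih j (by omega)) _
  -- `f` comes from a symmetric polynomial
  obtain ⟨P, rfl⟩ := polyFun_repr hf
  have hsym : P.IsSymmetric := by
    intro σ
    apply MvPolynomial.funext
    intro x
    set x' : EuclideanSpace ℝ (Fin n) := WithLp.toLp 2 x with hx'
    have h1 := hinv σ x'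
    rw [eval_rename]
    calc MvPolynomial.eval (x ∘ σ) P
        = MvPolynomial.eval (fun i => (sgnPerm (fun _ => 1) σ x') i) P := by
          have hfun : (x ∘ σ : Fin n → ℝ) = fun i => sgnPerm (fun _ => 1) σ x' i := by
            funext i
            show x (σ i) = 1 * x (σ i)
            rw [one_mul]
          rw [hfun]
      _ = Phi n P (sgnPerm (fun _ => 1) σ x') := (Phi_apply _ _).symm
      _ = Phi n P x' := h1
      _ = MvPolynomial.eval x P := Phi_apply _ _
  have hP := symm_mem_adjoin_psum P hsym
  have hmap : Phi n P ∈ Algebra.adjoin ℝ (⇑(Phi n) '' Set.range (psum (Fin n) ℝ)) := by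
    rw [← AlgHom.map_adjoin]
    exact ⟨P, hP, rfl⟩
  refine Algebra.adjoin_le ?_ hmap
  rintro _ ⟨_, ⟨kk, rfl⟩, rfl⟩
  rw [Phi_psum]
  exact hall kk
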